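/- If X_M contains no periodic point of the shift, S is countable, φ is summable, and A is finitely irreducible, then the spectral radius of the transfer operator L_M on C_b(X) is zero. In particular, any M-admissible finite word consists of pairwise distinct symbols, and for every η > 0 there is a constant c with ‖L_M^n 1‖_∞ ≤ c ηⁿ⁻ᵐ for all large n. -/

import Mathlib

open Filter MeasureTheory Topology
open scoped ENNReal NNReal BigOperators

namespace TMS

variable {S : Type*}

/-- prepend a symbol to a one-sided sequence -/
def cons (a : S) (ω : ℕ → S) : ℕ → S
  | 0 => a
  | n + 1 => ω n

/-- the shift transformation -/
def shift (ω : ℕ → S) : ℕ → S := fun n => ω (n + 1)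

/-- the (one-sided) topological Markov shift with transition matrix `A` -/
def markovShift (A : S → S → Prop) : Set (ℕ → S) := {ω | ∀ n, A (ω n) (ω (n + 1))}

/-- the cylinder set of a word of length `n`, inside `X` -/
def cylW (X : Set (ℕ → S)) (n : ℕ) (w : Fin n → S) : Set (ℕ → S) :=
  {ω | ω ∈ X ∧ ∀ i : Fin n, ω i = w i}

/-- the cylinder set of a single symbol, inside `X` -/
def cyl1 (X : Set (ℕ → S)) (s : S) : Set (ℕ → S) := {ω | ω ∈ X ∧ ω 0 = s}

/-- Birkhoff sum `S_n φ` -/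
noncomputable def birkhoff (φ : (ℕ → S) → ℝ) (n : ℕ) (ω : ℕ → S) : ℝ :=
  ∑ i ∈ Finset.range n, φ (shift^[i] ω)

open Classical in
/-- the metric `d_θ` -/
noncomputable def dtheta (θ : ℝ) (ω υ : ℕ → S) : ℝ :=
  if ω = υ then 0 else θ ^ sInf {n | ω n ≠ υ n}

/-- supremum norm over `X` -/
noncomputable def supNorm (X : Set (ℕ → S)) (f : (ℕ → S) → ℝ) : ℝ :=
  sSup ((fun ω => |f ω|) '' X)

/-- `C` is a bound witnessing `[f]_k ≤ C`, i.e. `var_n f ≤ C θ^n` for all `n ≥ k`. -/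
def LipBound (X : Set (ℕ → S)) (θ : ℝ) (k : ℕ) (f : (ℕ → S) → ℝ) (C : ℝ) : Prop :=
  ∀ n, k ≤ n → ∀ ω, ω ∈ X → ∀ υ, υ ∈ X → (∀ i, i < n → ω i = υ i) →
    |f ω - f υ| ≤ C * θ ^ n

/-- the seminorm `[f]_k` -/
noncomputable def lipSemi (X : Set (ℕ → S)) (θ : ℝ) (k : ℕ) (f : (ℕ → S) → ℝ) : ℝ :=
  sInf {C | 0 ≤ C ∧ LipBound X θ k f C}

/-- the norm `‖f‖_k = ‖f‖_∞ + [f]_k` -/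
noncomputable def normK (X : Set (ℕ → S)) (θ : ℝ) (k : ℕ) (f : (ℕ → S) → ℝ) : ℝ :=
  supNorm X f + lipSemi X θ k f

/-- `φ` is summable: `Σ_{s : [s] ≠ ∅} exp (sup_{[s]} φ) < ∞` -/
def SummableOn (X : Set (ℕ → S)) (φ : (ℕ → S) → ℝ) : Prop :=
  (∀ s : S, BddAbove (φ '' cyl1 X s)) ∧
    Summable (fun s : {s : S // (cyl1 X s).Nonempty} => Real.exp (sSup (φ '' cyl1 X s.1)))

/-- finite irreducibility of a transition matrix -/
def FinitelyIrreducible (A : S → S → Prop) : Prop :=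
  ∃ F : Finset (List S), ∀ a b : S, ∃ w ∈ F, List.Chain' A (a :: (w ++ [b]))

/-- `X` contains a periodic point of the shift -/
def HasPeriodicPoint (X : Set (ℕ → S)) : Prop :=
  ∃ ω, ω ∈ X ∧ ∃ m, 0 < m ∧ shift^[m] ω = ω

/-- the Ruelle transfer operator `L_M` associated to `M` and the potential `φ` -/
noncomputable def transfer (M : S → S → Prop) (φ : (ℕ → S) → ℝ)
    (f : (ℕ → S) → ℝ) : (ℕ → S) → ℝ :=
  fun ω => ∑' a : {a : S // M a (ω 0)}, Real.exp (φ (cons a ω)) * f (cons a ω)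

section Top

variable [TopologicalSpace S]

/-- the cone `Λ^k_c` -/
def cone (X : Set (ℕ → S)) (θ : ℝ) (k : ℕ) (c : ℝ) : Set ((ℕ → S) → ℝ) :=
  {f | ContinuousOn f X ∧ (∀ ω ∈ X, 0 ≤ f ω) ∧
    ∀ ω ∈ X, ∀ υ ∈ X, (∀ i, i < k → ω i = υ i) →
      f ω ≤ Real.exp (c * dtheta θ ω υ) * f υ}

/-- the space `C_b(X)` of bounded continuous functions -/
def Cb (X : Set (ℕ → S)) : Set ((ℕ → S) → ℝ) :=
  {f | ContinuousOn f X ∧ BddAbove ((fun ω => |f ω|) '' X)}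

/-- the space `F^k_b(X)` of bounded weak-Lipschitz functions -/
def Fkb (X : Set (ℕ → S)) (θ : ℝ) (k : ℕ) : Set ((ℕ → S) → ℝ) :=
  {f | f ∈ Cb X ∧ ∃ C, LipBound X θ k f C}

end Top

/-- operator norm of `L` on the space `F` with norm `N` -/
noncomputable def opNorm (N : ((ℕ → S) → ℝ) → ℝ) (F : Set ((ℕ → S) → ℝ))
    (L : ((ℕ → S) → ℝ) → (ℕ → S) → ℝ) : ℝ :=
  sSup {r | ∃ f ∈ F, N f ≤ 1 ∧ r = N (L f)}

/-- spectral radius of `L` on `(F, N)` via the Gelfand formula -/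
noncomputable def specRad (N : ((ℕ → S) → ℝ) → ℝ) (F : Set ((ℕ → S) → ℝ))
    (L : ((ℕ → S) → ℝ) → (ℕ → S) → ℝ) : ℝ :=
  Filter.limsup (fun n : ℕ => (opNorm N F (L^[n])) ^ ((1 : ℝ) / n)) Filter.atTop

/-- the `n`-th partition function `Σ_{w ∈ Sⁿ, [w] ≠ ∅} exp (sup_{[w]} S_n φ)` -/
noncomputable def partition (X : Set (ℕ → S)) (φ : (ℕ → S) → ℝ) (n : ℕ) : ℝ≥0∞ :=
  ∑' w : {w : Fin n → S // (cylW X n w).Nonempty},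
    ENNReal.ofReal (Real.exp (sSup (birkhoff φ n '' cylW X n w.1)))

/-- `P` is the topological pressure of `φ` on `X` -/
def IsPressure (X : Set (ℕ → S)) (φ : (ℕ → S) → ℝ) (P : ℝ) : Prop :=
  Filter.Tendsto (fun n : ℕ => Real.log (partition X φ n).toReal / (n : ℝ))
    Filter.atTop (nhds P)

/-- there is an `M`-path from `a` to `b` (of length at least one) -/
def reaches (M : S → S → Prop) (a b : S) : Prop :=
  ∃ l : List S, List.Chain M a (l ++ [b])

/-- communication relation `a ↔ b` -/
def comm (M : S → S → Prop) (a b : S) : Prop :=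
  a = b ∨ (reaches M a b ∧ reaches M b a)

/-- the submatrix of `M` indexed by `T` -/
def restrictM (M : S → S → Prop) (T : Set S) : S → S → Prop :=
  fun a b => M a b ∧ a ∈ T ∧ b ∈ T

/-- support of a Borel measure -/
def msupport [TopologicalSpace S] [MeasurableSpace S] (ν : Measure (ℕ → S)) :
    Set (ℕ → S) :=
  {ω | ∀ U : Set (ℕ → S), IsOpen U → ω ∈ U → 0 < ν U}

end TMS
namespace Stmt6Aux

open TMS

variable {S : Type*}

lemma shift_iterate (k : ℕ) (ω : ℕ → S) : TMS.shift^[k] ω = fun n => ω (n + k) := by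
  induction k with
  | zero => simp
  | succ k ih =>
    rw [Function.iterate_succ_apply', ih]
    funext n
    show ω (n + 1 + k) = ω (n + (k + 1))
    congr 1
    omega

lemma cycle_periodic {M : S → S → Prop} {a : S} {l : List S}
    (h : List.Chain M a (l ++ [a])) : TMS.HasPeriodicPoint (TMS.markovShift M) := by
  set c : List S := a :: l with hc
  set p : ℕ := l.length + 1 with hp
  have hclen : c.length = p := by simp [hc, hp]
  have hmod : ∀ n : ℕ, n % p < c.length := fun n => by
    rw [hclen]; exact Nat.mod_lt _ (by omega)
  have hch : List.Chain' M (c ++ [a]) := h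
  have hget : ∀ i (h : i < (c ++ [a]).length - 1), M ((c ++ [a]).get ⟨i, by omega⟩) ((c ++ [a]).get ⟨i + 1, by omega⟩) :=
    fun i h => List.isChain_iff_getElem.mp hch i (by omega)
  have key : ∀ i, (hi : i < p) → M (c.get ⟨i, by omega⟩) (c.get ⟨(i + 1) % p, hmod (i + 1)⟩) := by
    intro i hi
    have hlen : (c ++ [a]).length = p + 1 := by simp [hclen]
    have h1 : i < (c ++ [a]).length - 1 := by omega
    have h2 := hget i h1
    have hL : (c ++ [a]).get ⟨i, by omega⟩ = c.get ⟨i, by omega⟩ :=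
      by rw [List.get_eq_getElem, List.get_eq_getElem]; exact List.getElem_append_left (by omega)
    rcases lt_or_eq_of_le (Nat.succ_le_of_lt hi) with h3 | h3
    · -- i+1 < p
      have hR : (c ++ [a]).get ⟨i + 1, by omega⟩ = c.get ⟨(i + 1) % p, hmod (i + 1)⟩ := by
        have hX : (c ++ [a]).get ⟨i + 1, by omega⟩ = c.get ⟨i + 1, by omega⟩ := by
          rw [List.get_eq_getElem, List.get_eq_getElem]; exact List.getElem_append_left (by omega)
        rw [hX]
        congr 1
        exact Fin.ext (Nat.mod_eq_of_lt h3).symm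
      rw [hL, hR] at h2; exact h2
    · -- i+1 = p
      have h4 : i + 1 = c.length := by omega
      have hR : (c ++ [a]).get ⟨i + 1, by omega⟩ = a := by
        simp only [h4]
        simp
      have h0 : (i + 1) % p = 0 := by
        have h5 : i + 1 = p := h3
        rw [h5, Nat.mod_self]
      have hA0 : c.get ⟨(i + 1) % p, hmod (i + 1)⟩ = a := by
        have he : c.get ⟨(i+1) % p, hmod (i+1)⟩ = c.get ⟨0, by simp [hc]⟩ := by
          congr 1
          exact Fin.ext h0
        rw [he]; rfl
      rw [hL, hR] at h2
      rw [hA0]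
      exact h2
  refine ⟨fun n => c.get ⟨n % p, hmod n⟩, ?_, p, by omega, ?_⟩
  · intro n
    have h2 : (n + 1) % p = (n % p + 1) % p := by
      conv_lhs => rw [← Nat.div_add_mod n p, Nat.add_assoc, Nat.mul_add_mod]
    have hk := key (n % p) (Nat.mod_lt _ (by omega))
    have he : c.get ⟨(n + 1) % p, hmod (n + 1)⟩ = c.get ⟨(n % p + 1) % p, hmod (n % p + 1)⟩ := by
      congr 1
      exact Fin.ext h2
    show M (c.get ⟨n % p, hmod n⟩) (c.get ⟨(n + 1) % p, hmod (n + 1)⟩)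
    rw [he]
    exact hk
  · rw [shift_iterate]
    funext n
    have h3 : (n + p) % p = n % p := Nat.add_mod_right n p
    show c.get ⟨(n + p) % p, hmod (n + p)⟩ = c.get ⟨n % p, hmod n⟩
    congr 1
    exact Fin.ext h3

lemma chain_nodup {M : S → S → Prop}
    (hnc : ∀ (a : S) (l : List S), ¬ List.Chain M a (l ++ [a])) :
    ∀ l : List S, l.Chain' M → l.Nodup := by
  intro l
  induction l with
  | nil => simp
  | cons a l ih =>
    intro h
    have hch : List.Chain M a l := h
    rw [List.nodup_cons]
    refine ⟨?_, ih (List.IsChain.tail h)⟩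
    intro hal
    obtain ⟨s, t, rfl⟩ := List.append_of_mem hal
    exact hnc a s (List.isChain_cons_split.mp hch).1

variable [DecidableEq S]

/-- recursive upper bound function -/
noncomputable def Dfun (g : S → ℝ) (η : ℝ) (T : Finset S) : ℕ → Finset S → ℝ
  | 0, _ => 1
  | n+1, K => (∑ a ∈ T \ K, g a * Dfun g η T n (insert a K)) + η * Dfun g η T n K

lemma Dfun_nonneg {g : S → ℝ} {η : ℝ} {T : Finset S} (hg : ∀ s, 0 ≤ g s) (hη : 0 ≤ η) :
    ∀ n K, 0 ≤ Dfun g η T n K := by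
  intro n
  induction n with
  | zero => intro K; simp [Dfun]
  | succ n ih =>
    intro K
    have h1 : 0 ≤ ∑ a ∈ T \ K, g a * Dfun g η T n (insert a K) :=
      Finset.sum_nonneg fun a _ => mul_nonneg (hg a) (ih _)
    have h2 : 0 ≤ η * Dfun g η T n K := mul_nonneg hη (ih _)
    simpa [Dfun] using add_nonneg h1 h2

lemma Dfun_anti {g : S → ℝ} {η : ℝ} {T : Finset S} (hg : ∀ s, 0 ≤ g s) (hη : 0 ≤ η) :
    ∀ n {K K' : Finset S}, K ⊆ K' → Dfun g η T n K' ≤ Dfun g η T n K := by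
  intro n
  induction n with
  | zero => intro K K' _; simp [Dfun]
  | succ n ih =>
    intro K K' hKK
    have hsub : T \ K' ⊆ T \ K := Finset.sdiff_subset_sdiff (le_refl T) hKK
    have h1 : (∑ a ∈ T \ K', g a * Dfun g η T n (insert a K')) ≤
        ∑ a ∈ T \ K', g a * Dfun g η T n (insert a K) :=
      Finset.sum_le_sum fun a _ =>
        mul_le_mul_of_nonneg_left (ih (Finset.insert_subset_insert a hKK)) (hg a)
    have h2 : (∑ a ∈ T \ K', g a * Dfun g η T n (insert a K)) ≤
        ∑ a ∈ T \ K, g a * Dfun g η T n (insert a K) :=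
      Finset.sum_le_sum_of_subset_of_nonneg hsub
        (fun a _ _ => mul_nonneg (hg a) (Dfun_nonneg hg hη _ _))
    have h3 : η * Dfun g η T n K' ≤ η * Dfun g η T n K :=
      mul_le_mul_of_nonneg_left (ih hKK) hη
    show (∑ a ∈ T \ K', g a * Dfun g η T n (insert a K')) + η * Dfun g η T n K' ≤
        (∑ a ∈ T \ K, g a * Dfun g η T n (insert a K)) + η * Dfun g η T n K
    linarith

lemma Dfun_bound {g : S → ℝ} {η : ℝ} {T : Finset S} (hg : ∀ s, 0 ≤ g s)
    (hη0 : 0 ≤ η) (hη1 : η ≤ 1) :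
    ∀ (t n : ℕ) (K : Finset S), (T \ K).card ≤ t →
      Dfun g η T n K ≤ (max 1 (∑ a ∈ T, g a)) ^ t * ((n : ℝ) + 1) ^ t * η ^ (n - t) := by
  have hP1 : (1:ℝ) ≤ max 1 (∑ a ∈ T, g a) := le_max_left _ _
  set P : ℝ := max 1 (∑ a ∈ T, g a) with hPdef
  intro t
  induction t with
  | zero =>
    intro n
    induction n with
    | zero => intro K _; simp [Dfun]
    | succ n ihn =>
      intro K hK
      have hempty : T \ K = ∅ := Finset.card_eq_zero.mp (le_antisymm hK (Nat.zero_le _))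
      have h1 := ihn K hK
      show (∑ a ∈ T \ K, g a * Dfun g η T n (insert a K)) + η * Dfun g η T n K ≤ _
      rw [hempty, Finset.sum_empty, zero_add]
      simp only [pow_zero, one_mul, Nat.sub_zero] at h1 ⊢
      calc η * Dfun g η T n K ≤ η * η ^ n := mul_le_mul_of_nonneg_left h1 hη0
        _ = η ^ (n + 1) := by rw [pow_succ]; ring
  | succ t iht =>
    intro n
    induction n with
    | zero =>
      intro K _
      have h1 : Dfun g η T 0 K = 1 := rfl
      rw [h1]
      simp only [Nat.cast_zero, zero_add, one_pow, Nat.zero_sub, pow_zero, mul_one]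
      calc (1:ℝ) = 1 ^ (t+1) := by simp
        _ ≤ P ^ (t+1) := pow_le_pow_left₀ zero_le_one hP1 _
    | succ n ihn =>
      intro K hK
      have hG : ∑ a ∈ T \ K, g a ≤ P :=
        le_trans (Finset.sum_le_sum_of_subset_of_nonneg Finset.sdiff_subset
          (fun a _ _ => hg a)) (le_max_right _ _)
      have hterm : ∀ a ∈ T \ K,
          Dfun g η T n (insert a K) ≤ P ^ t * ((n : ℝ) + 1) ^ t * η ^ (n - t) := by
        intro a ha
        apply iht
        have he : T \ insert a K = (T \ K).erase a := by
          ext x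
          simp only [Finset.mem_sdiff, Finset.mem_erase, Finset.mem_insert]
          tauto
        rw [he, Finset.card_erase_of_mem ha]
        omega
      have hIn := ihn K hK
      have hee : η * η ^ (n - (t+1)) ≤ η ^ (n - t) := by
        rcases le_or_gt n t with hnt | hnt
        · have e1 : n - t = 0 := by omega
          have e2 : n - (t+1) = 0 := by omega
          simp [e1, e2, hη1]
        · have e1 : n - t = (n - (t+1)) + 1 := by omega
          rw [e1, pow_succ]
          ring_nf
          exact le_rfl
      have step1 : (∑ a ∈ T \ K, g a * Dfun g η T n (insert a K)) ≤
          (∑ a ∈ T \ K, g a) * (P ^ t * ((n : ℝ) + 1) ^ t * η ^ (n - t)) := by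
        rw [Finset.sum_mul]
        exact Finset.sum_le_sum fun a ha =>
          mul_le_mul_of_nonneg_left (hterm a ha) (hg a)
      have step1' : (∑ a ∈ T \ K, g a) * (P ^ t * ((n : ℝ) + 1) ^ t * η ^ (n - t)) ≤
          P ^ (t+1) * ((n : ℝ) + 1) ^ t * η ^ (n - t) := by
        have hb : (0:ℝ) ≤ P ^ t * ((n : ℝ) + 1) ^ t * η ^ (n - t) := by positivity
        calc (∑ a ∈ T \ K, g a) * (P ^ t * ((n : ℝ) + 1) ^ t * η ^ (n - t)) ≤
            P * (P ^ t * ((n : ℝ) + 1) ^ t * η ^ (n - t)) :=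
              mul_le_mul_of_nonneg_right hG hb
          _ = P ^ (t+1) * ((n : ℝ) + 1) ^ t * η ^ (n - t) := by ring
      have step2 : η * Dfun g η T n K ≤ P ^ (t+1) * ((n : ℝ) + 1) ^ (t+1) * η ^ (n - t) := by
        calc η * Dfun g η T n K ≤ η * (P ^ (t+1) * ((n : ℝ) + 1) ^ (t+1) * η ^ (n - (t+1))) :=
              mul_le_mul_of_nonneg_left hIn hη0
          _ = P ^ (t+1) * ((n : ℝ) + 1) ^ (t+1) * (η * η ^ (n - (t+1))) := by ring
          _ ≤ P ^ (t+1) * ((n : ℝ) + 1) ^ (t+1) * η ^ (n - t) := by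
              apply mul_le_mul_of_nonneg_left hee
              positivity
      have hpoly : ((n:ℝ)+1)^t + ((n:ℝ)+1)^(t+1) ≤ ((n:ℝ)+2)^(t+1) := by
        have h1 : ((n:ℝ)+1)^t ≤ ((n:ℝ)+2)^t :=
          pow_le_pow_left₀ (by positivity) (by linarith) t
        calc ((n:ℝ)+1)^t + ((n:ℝ)+1)^(t+1) = ((n:ℝ)+2) * ((n:ℝ)+1)^t := by ring
          _ ≤ ((n:ℝ)+2) * ((n:ℝ)+2)^t := by
              apply mul_le_mul_of_nonneg_left h1
              positivity
          _ = ((n:ℝ)+2)^(t+1) := by ring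
      have hfin : P ^ (t+1) * ((n : ℝ) + 1) ^ t * η ^ (n - t)
          + P ^ (t+1) * ((n : ℝ) + 1) ^ (t+1) * η ^ (n - t) ≤
          P ^ (t+1) * ((n : ℝ) + 2) ^ (t+1) * η ^ (n - t) := by
        have hb : (0:ℝ) ≤ P ^ (t+1) * η ^ (n - t) := by positivity
        calc P ^ (t+1) * ((n : ℝ) + 1) ^ t * η ^ (n - t)
            + P ^ (t+1) * ((n : ℝ) + 1) ^ (t+1) * η ^ (n - t)
            = (P ^ (t+1) * η ^ (n - t)) * (((n:ℝ)+1)^t + ((n:ℝ)+1)^(t+1)) := by ring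
          _ ≤ (P ^ (t+1) * η ^ (n - t)) * ((n:ℝ)+2)^(t+1) :=
              mul_le_mul_of_nonneg_left hpoly hb
          _ = P ^ (t+1) * ((n : ℝ) + 2) ^ (t+1) * η ^ (n - t) := by ring
      show (∑ a ∈ T \ K, g a * Dfun g η T n (insert a K)) + η * Dfun g η T n K ≤
          P ^ (t+1) * ((↑(n+1) : ℝ) + 1) ^ (t+1) * η ^ ((n+1) - (t+1))
      have hc1 : ((↑(n+1) : ℝ) + 1) = (n:ℝ) + 2 := by push_cast; ring
      have hc2 : (n+1) - (t+1) = n - t := by omega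
      rw [hc1, hc2]
      calc (∑ a ∈ T \ K, g a * Dfun g η T n (insert a K)) + η * Dfun g η T n K
          ≤ (P ^ (t+1) * ((n : ℝ) + 1) ^ t * η ^ (n - t))
            + P ^ (t+1) * ((n : ℝ) + 1) ^ (t+1) * η ^ (n - t) := by
            have := le_trans step1 step1'
            linarith [step2]
        _ ≤ P ^ (t+1) * ((n : ℝ) + 2) ^ (t+1) * η ^ (n - t) := hfin

end Stmt6Aux

/-- if `X_M` has no periodic point, then every `M`-admissible word has
pairwise distinct symbols, `‖L_M^n 1‖_∞ ≤ c ηⁿ⁻ᵐ`, and the spectral radius of `L_M`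
on `C_b(X)` is zero. -/
theorem stmt6 {S : Type*} [Countable S] [TopologicalSpace S] [DiscreteTopology S]
    (A M : S → S → Prop) (hMA : ∀ a b, M a b → A a b)
    (hA : TMS.FinitelyIrreducible A)
    (φ : (ℕ → S) → ℝ) (hφ : TMS.SummableOn (TMS.markovShift A) φ)
    (hnoper : ¬ TMS.HasPeriodicPoint (TMS.markovShift M)) :
    TMS.specRad (TMS.supNorm (TMS.markovShift A)) (TMS.Cb (TMS.markovShift A))
        (TMS.transfer M φ) = 0 ∧
      (∀ l : List S, l.Chain' M → l.Nodup) ∧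
      (∀ η : ℝ, 0 < η → ∃ c : ℝ, 0 < c ∧ ∃ m : ℕ, ∀ n : ℕ, m < n →
        TMS.supNorm (TMS.markovShift A) ((TMS.transfer M φ)^[n] (fun _ => (1 : ℝ))) ≤
          c * η ^ (n - m)) := by
  classical
  set X : Set (ℕ → S) := TMS.markovShift A with hX
  have no_cycle : ∀ (a : S) (l : List S), ¬ List.Chain M a (l ++ [a]) :=
    fun a l h => hnoper (Stmt6Aux.cycle_periodic h)
  have hnodup : ∀ l : List S, l.Chain' M → l.Nodup := Stmt6Aux.chain_nodup no_cycle
  -- the summable majorant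
  set g : S → ℝ := fun s => if (TMS.cyl1 X s).Nonempty
      then Real.exp (sSup (φ '' TMS.cyl1 X s)) else 0 with hgdef
  have hg0 : ∀ s, 0 ≤ g s := by
    intro s
    by_cases h : (TMS.cyl1 X s).Nonempty
    · simp only [hgdef, if_pos h]; exact (Real.exp_pos _).le
    · simp [hgdef, if_neg h]
  have hgsum : Summable g := by
    have h2 := hφ.2
    have heq : g = Set.indicator {s : S | (TMS.cyl1 X s).Nonempty}
        (fun s => Real.exp (sSup (φ '' TMS.cyl1 X s))) := by
      funext s
      by_cases h : (TMS.cyl1 X s).Nonempty <;>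
        simp [hgdef, Set.indicator_apply, h]
    rw [heq, ← summable_subtype_iff_indicator]
    exact h2
  have hconsX : ∀ (a : S) (ω : ℕ → S), ω ∈ X → A a (ω 0) → TMS.cons a ω ∈ X := by
    intro a ω hω ha n
    cases n with
    | zero => exact ha
    | succ n => exact hω n
  have hgdom : ∀ (a : S) (ω : ℕ → S), ω ∈ X → A a (ω 0) →
      Real.exp (φ (TMS.cons a ω)) ≤ g a := by
    intro a ω hω ha
    have hmem : TMS.cons a ω ∈ TMS.cyl1 X a := ⟨hconsX a ω hω ha, rfl⟩
    have hne : (TMS.cyl1 X a).Nonempty := ⟨_, hmem⟩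
    simp only [hgdef, if_pos hne]
    exact Real.exp_le_exp.mpr (le_csSup (hφ.1 a) ⟨_, hmem, rfl⟩)
  -- master bound
  have master : ∀ η : ℝ, 0 < η → ∃ c : ℝ, 0 < c ∧ ∃ m : ℕ, ∀ n : ℕ, m < n →
      ∀ f : (ℕ → S) → ℝ, (∀ ω ∈ X, |f ω| ≤ 1) →
        TMS.supNorm X ((TMS.transfer M φ)^[n] f) ≤ c * η ^ (n - m) := by
    intro η hη
    set η₀ : ℝ := min η 1 / 2 with hη₀def
    have hmin : 0 < min η 1 := lt_min hη one_pos
    have hη₀pos : 0 < η₀ := by rw [hη₀def]; linarith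
    have hη₀le1 : η₀ ≤ 1 := by
      have := min_le_right η 1
      rw [hη₀def]; linarith
    have hη₀leη2 : η₀ ≤ η / 2 := by
      have := min_le_left η 1
      rw [hη₀def]; linarith
    obtain ⟨T, hT⟩ : ∃ T : Finset S, (∑' a : {x : S // x ∉ T}, g ↑a) < η₀ :=
      (Filter.Tendsto.eventually_lt_const hη₀pos (tendsto_tsum_compl_atTop_zero g)).exists
    have htail : (∑' a : S, if a ∈ T then 0 else g a) ≤ η₀ := by
      have h1 : (∑' a : S, if a ∈ T then 0 else g a) = ∑' a : {x : S | x ∉ T}, g ↑a := by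
        rw [tsum_subtype {x : S | x ∉ T} g]
        congr 1
        funext a
        by_cases h : a ∈ T <;> simp [Set.indicator_apply, h]
      rw [h1]
      exact le_of_lt hT
    set D : ℕ → Finset S → ℝ := Stmt6Aux.Dfun g η₀ T with hD
    have hDnn : ∀ n K, 0 ≤ D n K := Stmt6Aux.Dfun_nonneg hg0 hη₀pos.le
    -- key pointwise bound
    have key : ∀ f : (ℕ → S) → ℝ, (∀ ω ∈ X, |f ω| ≤ 1) →
        ∀ (n : ℕ) (K : Finset S) (ω : ℕ → S), ω ∈ X →
          (∀ a : S, TMS.reaches M a (ω 0) → a ∉ K) →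
          |(TMS.transfer M φ)^[n] f ω| ≤ D n K := by
      intro f hf n
      induction n with
      | zero =>
        intro K ω hω _
        simpa [hD, Stmt6Aux.Dfun] using hf ω hω
      | succ n IH =>
        intro K ω hω hK
        rw [Function.iterate_succ_apply']
        set F := (TMS.transfer M φ)^[n] f with hF
        have hnotK : ∀ a : S, M a (ω 0) → a ∉ K := by
          intro a ha
          refine hK a ⟨[], ?_⟩
          simp only [List.nil_append]
          exact List.IsChain.cons_cons ha (.singleton _)
        set Ka : S → Finset S := fun a => if a ∈ T then insert a K else K with hKa
        have hrec : ∀ a : S, M a (ω 0) →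
            (∀ b : S, TMS.reaches M b ((TMS.cons a ω) 0) → b ∉ Ka a) := by
          intro a ha b hb
          obtain ⟨l, hl⟩ := hb
          have hl' : List.Chain M b (l ++ [a]) := hl
          have hreach : TMS.reaches M b (ω 0) := by
            refine ⟨l ++ [a], ?_⟩
            rw [List.append_assoc]
            exact (List.isChain_cons_split (c := a) (l₁ := l) (l₂ := [ω 0])).mpr ⟨hl', List.IsChain.cons_cons ha (.singleton _)⟩
          have hbK : b ∉ K := hK b hreach
          have hba : b ≠ a := by
            intro h
            subst h
            exact no_cycle b l hl'
          by_cases hat : a ∈ T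
          · simp only [hKa, if_pos hat, Finset.mem_insert]
            push_neg
            exact ⟨hba, hbK⟩
          · simp only [hKa, if_neg hat]
            exact hbK
        set dS : S → ℝ := fun a => g a * D n (Ka a) with hdS
        have hdS_nonneg : ∀ a, 0 ≤ dS a := fun a => mul_nonneg (hg0 a) (hDnn _ _)
        have hdS_le : ∀ a, dS a ≤ g a * D n K := by
          intro a
          refine mul_le_mul_of_nonneg_left ?_ (hg0 a)
          apply Stmt6Aux.Dfun_anti hg0 hη₀pos.le
          by_cases hat : a ∈ T
          · simp only [hKa, if_pos hat]
            exact Finset.subset_insert a K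
          · simp only [hKa, if_neg hat]
            exact Finset.Subset.refl K
        have hsum_gD : Summable (fun a => g a * D n K) := hgsum.mul_right _
        have hsum_dS : Summable dS := hsum_gD.of_nonneg_of_le hdS_nonneg hdS_le
        have h1 : ∀ a : {a : S // M a (ω 0)},
            |Real.exp (φ (TMS.cons (↑a) ω)) * F (TMS.cons (↑a) ω)| ≤ dS ↑a := by
          rintro ⟨a, ha⟩
          have hca : TMS.cons a ω ∈ X := hconsX a ω hω (hMA _ _ ha)
          have h2 : |F (TMS.cons a ω)| ≤ D n (Ka a) := IH (Ka a) _ hca (hrec a ha)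
          rw [abs_mul, abs_of_pos (Real.exp_pos _)]
          exact mul_le_mul (hgdom a ω hω (hMA _ _ ha)) h2 (abs_nonneg _) (hg0 a)
        have hsum_sub : Summable (fun a : {a : S // M a (ω 0)} => dS ↑a) :=
          hsum_dS.subtype {a : S | M a (ω 0)}
        have hsum_abs : Summable (fun a : {a : S // M a (ω 0)} =>
            |Real.exp (φ (TMS.cons (↑a) ω)) * F (TMS.cons (↑a) ω)|) :=
          Summable.of_nonneg_of_le (fun _ => abs_nonneg _) h1 hsum_sub
        have hb1 : |TMS.transfer M φ F ω| ≤
            ∑' a : {a : S // M a (ω 0)}, |Real.exp (φ (TMS.cons (↑a) ω)) * F (TMS.cons (↑a) ω)| := by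
          have hn := norm_tsum_le_tsum_norm
            (f := fun a : {a : S // M a (ω 0)} =>
              Real.exp (φ (TMS.cons (↑a) ω)) * F (TMS.cons (↑a) ω))
            (by simpa only [Real.norm_eq_abs] using hsum_abs)
          rw [show TMS.transfer M φ F ω = ∑' a : {a : S // M a (ω 0)},
            Real.exp (φ (TMS.cons (↑a) ω)) * F (TMS.cons (↑a) ω) from rfl]
          simpa only [Real.norm_eq_abs] using hn
        have hb2 : (∑' a : {a : S // M a (ω 0)},
              |Real.exp (φ (TMS.cons (↑a) ω)) * F (TMS.cons (↑a) ω)|) ≤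
            ∑' a : {a : S // M a (ω 0)}, dS ↑a :=
          Summable.tsum_le_tsum h1 hsum_abs hsum_sub
        set I₁ : S → ℝ := fun a => if a ∈ T \ K then g a * D n (insert a K) else 0 with hI₁
        set I₂ : S → ℝ := fun a => if a ∈ T then 0 else g a * D n K with hI₂
        have hI₁sum : Summable I₁ :=
          summable_of_ne_finset_zero (s := T \ K) (fun a ha => if_neg ha)
        have hI₂eq : I₂ = fun a => (if a ∈ T then 0 else g a) * D n K := by
          funext a
          by_cases h : a ∈ T <;> simp [hI₂, h]
        have hI₂sum : Summable I₂ := by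
          rw [hI₂eq]
          apply Summable.mul_right
          refine hgsum.of_nonneg_of_le (fun a => ?_) (fun a => ?_)
          · by_cases h : a ∈ T <;> simp [h, hg0 a]
          · by_cases h : a ∈ T <;> simp [h, hg0 a]
        have hb3 : (∑' a : {a : S // M a (ω 0)}, dS ↑a) ≤ ∑' a : S, (I₁ a + I₂ a) := by
          refine Summable.tsum_le_tsum_of_inj Subtype.val Subtype.val_injective
            (fun c _ => ?_) (fun a => ?_) hsum_sub (hI₁sum.add hI₂sum)
          · refine add_nonneg ?_ ?_
            · by_cases h : c ∈ T \ K
              · simp only [hI₁, if_pos h]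
                exact mul_nonneg (hg0 c) (hDnn _ _)
              · simp only [hI₁, if_neg h]
                exact le_rfl
            · by_cases h : c ∈ T
              · simp only [hI₂, if_pos h]
                exact le_rfl
              · simp only [hI₂, if_neg h]
                exact mul_nonneg (hg0 c) (hDnn _ _)
          · obtain ⟨a, ha⟩ := a
            have haK : a ∉ K := hnotK a ha
            by_cases hat : a ∈ T
            · have hmem : a ∈ T \ K := Finset.mem_sdiff.mpr ⟨hat, haK⟩
              simp only [hdS, hI₁, hI₂, hKa, if_pos hat, if_pos hmem]
              simp
            · have hnm : a ∉ T \ K := fun hh => hat (Finset.mem_sdiff.mp hh).1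
              simp only [hdS, hI₁, hI₂, hKa, if_neg hat, if_neg hnm]
              simp
        have hb4 : (∑' a : S, I₁ a) = ∑ a ∈ T \ K, g a * D n (insert a K) := by
          rw [tsum_eq_sum (s := T \ K) (fun a ha => if_neg ha)]
          exact Finset.sum_congr rfl (fun a ha => if_pos ha)
        have hb5 : (∑' a : S, I₂ a) ≤ η₀ * D n K := by
          rw [hI₂eq, tsum_mul_right]
          exact mul_le_mul_of_nonneg_right htail (hDnn _ _)
        have hDsucc : D (n+1) K = (∑ a ∈ T \ K, g a * D n (insert a K)) + η₀ * D n K := rfl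
        have hsplit : (∑' a : S, (I₁ a + I₂ a)) = (∑' a : S, I₁ a) + ∑' a : S, I₂ a :=
          Summable.tsum_add hI₁sum hI₂sum
        calc |TMS.transfer M φ F ω| ≤ _ := hb1
          _ ≤ ∑' a : {a : S // M a (ω 0)}, dS ↑a := hb2
          _ ≤ ∑' a : S, (I₁ a + I₂ a) := hb3
          _ = (∑' a : S, I₁ a) + ∑' a : S, I₂ a := hsplit
          _ ≤ (∑ a ∈ T \ K, g a * D n (insert a K)) + η₀ * D n K := by
              rw [hb4]
              linarith [hb5]
          _ = D (n+1) K := hDsucc.symm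
    -- sup-norm bound
    have hsup : ∀ (n : ℕ) (f : (ℕ → S) → ℝ), (∀ ω ∈ X, |f ω| ≤ 1) →
        TMS.supNorm X ((TMS.transfer M φ)^[n] f) ≤ D n ∅ := by
      intro n f hf
      refine Real.sSup_le ?_ (hDnn n ∅)
      rintro x ⟨ω, hω, rfl⟩
      exact key f hf n ∅ ω hω (fun a _ => Finset.notMem_empty a)
    set m := T.card with hm
    set P : ℝ := max 1 (∑ a ∈ T, g a) with hP
    have hP1 : (1:ℝ) ≤ P := le_max_left _ _
    have hDb : ∀ n, D n ∅ ≤ P ^ m * ((n:ℝ)+1) ^ m * η₀ ^ (n - m) := by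
      intro n
      apply Stmt6Aux.Dfun_bound hg0 hη₀pos.le hη₀le1
      simp [hm]
    have hgeo : Summable (fun k : ℕ => (k:ℝ) ^ m * (1/2 : ℝ) ^ k) := by
      apply summable_pow_mul_geometric_of_norm_lt_one
      rw [Real.norm_eq_abs, abs_of_pos] <;> norm_num
    obtain ⟨c₀, hc₀⟩ := hgeo.tendsto_atTop_zero.bddAbove_range
    have hc₀' : ∀ k : ℕ, (k:ℝ) ^ m * (1/2 : ℝ) ^ k ≤ c₀ := fun k => hc₀ ⟨k, rfl⟩
    refine ⟨P ^ m * 2 ^ (m+1) * max c₀ 1, by positivity, m, ?_⟩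
    intro n hn f hf
    refine le_trans (hsup n f hf) (le_trans (hDb n) ?_)
    -- numeric estimate
    have h1 : η₀ ^ (n - m) ≤ η ^ (n - m) * (1/2 : ℝ) ^ (n - m) := by
      have h2 : η₀ ^ (n - m) ≤ (η/2) ^ (n - m) :=
        pow_le_pow_left₀ hη₀pos.le hη₀leη2 _
      have h3 : (η/2 : ℝ) ^ (n - m) = η ^ (n - m) * (1/2 : ℝ) ^ (n - m) := by
        rw [← mul_pow]
        congr 1
        ring
      linarith [h2, h3.le]
    have hsplit2 : ((1:ℝ)/2) ^ (n - m) = ((1:ℝ)/2) ^ (n+1) * 2 ^ (m+1) := by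
      have he : n + 1 = (n - m) + (m + 1) := by omega
      rw [he, pow_add, mul_assoc, ← mul_pow]
      norm_num
    have h4 : ((n:ℝ)+1) ^ m * ((1:ℝ)/2) ^ (n+1) ≤ c₀ := by
      have := hc₀' (n+1)
      push_cast at this
      linarith
    have h5 : ((n:ℝ)+1) ^ m * ((1:ℝ)/2) ^ (n - m) ≤ 2 ^ (m+1) * max c₀ 1 := by
      rw [hsplit2, ← mul_assoc]
      have h6 : ((n:ℝ)+1) ^ m * ((1:ℝ)/2) ^ (n+1) ≤ max c₀ 1 :=
        le_trans h4 (le_max_left _ _)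
      calc ((n:ℝ)+1) ^ m * ((1:ℝ)/2) ^ (n+1) * 2 ^ (m+1)
          ≤ max c₀ 1 * 2 ^ (m+1) := by
            apply mul_le_mul_of_nonneg_right h6
            positivity
        _ = 2 ^ (m+1) * max c₀ 1 := by ring
    calc P ^ m * ((n:ℝ)+1) ^ m * η₀ ^ (n - m)
        ≤ P ^ m * ((n:ℝ)+1) ^ m * (η ^ (n - m) * (1/2 : ℝ) ^ (n - m)) := by
          apply mul_le_mul_of_nonneg_left h1
          positivity
      _ = P ^ m * (((n:ℝ)+1) ^ m * ((1:ℝ)/2) ^ (n - m)) * η ^ (n - m) := by ring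
      _ ≤ P ^ m * (2 ^ (m+1) * max c₀ 1) * η ^ (n - m) := by
          apply mul_le_mul_of_nonneg_right
          · apply mul_le_mul_of_nonneg_left h5
            positivity
          · positivity
      _ = P ^ m * 2 ^ (m+1) * max c₀ 1 * η ^ (n - m) := by ring
  refine ⟨?_, hnodup, ?_⟩
  · -- spectral radius
    set r : ℕ → ℝ := fun n =>
      TMS.opNorm (TMS.supNorm X) (TMS.Cb X) ((TMS.transfer M φ)^[n]) with hr
    set Sset : ℕ → Set ℝ := fun n => {x | ∃ f ∈ TMS.Cb X, TMS.supNorm X f ≤ 1 ∧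
      x = TMS.supNorm X ((TMS.transfer M φ)^[n] f)} with hSset
    have hrn : ∀ n, r n = sSup (Sset n) := fun n => rfl
    have hsupzero : TMS.supNorm X (fun _ => (0:ℝ)) = 0 := by
      refine le_antisymm (Real.sSup_le ?_ le_rfl) (Real.sSup_nonneg ?_)
      · rintro x ⟨ω, hω, rfl⟩; simp
      · rintro x ⟨ω, hω, rfl⟩; simp
    have hzero_iter : ∀ n : ℕ, (TMS.transfer M φ)^[n] (fun _ => (0:ℝ)) = fun _ => 0 := by
      intro n
      induction n with
      | zero => rfl
      | succ n ih =>
        rw [Function.iterate_succ_apply', ih]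
        funext ω
        simp [TMS.transfer]
    have hzero_mem : ∀ n, (0:ℝ) ∈ Sset n := by
      intro n
      refine ⟨fun _ => 0, ⟨continuousOn_const, ⟨0, ?_⟩⟩, ?_, ?_⟩
      · rintro x ⟨ω, hω, rfl⟩; simp
      · refine Real.sSup_le ?_ zero_le_one
        rintro x ⟨ω, hω, rfl⟩; simp
      · rw [hzero_iter n, hsupzero]
    have hr0 : ∀ n, 0 ≤ r n := by
      intro n
      rw [hrn]
      by_cases hb : BddAbove (Sset n)
      · exact le_csSup hb (hzero_mem n)
      · rw [Real.sSup_of_not_bddAbove hb]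
    have hrle : ∀ η : ℝ, 0 < η → ∃ c : ℝ, 0 < c ∧ ∃ m : ℕ, ∀ n, m < n →
        r n ≤ c * η ^ (n - m) := by
      intro η hη
      obtain ⟨c, hc, m, h⟩ := master η hη
      refine ⟨c, hc, m, fun n hn => ?_⟩
      rw [hrn]
      refine Real.sSup_le ?_ (by positivity)
      rintro x ⟨f, hfF, hf1, rfl⟩
      refine h n hn f ?_
      intro ω hω
      exact le_trans (le_csSup hfF.2 ⟨ω, hω, rfl⟩) hf1
    have hv : Filter.Tendsto (fun n : ℕ => (r n) ^ ((1:ℝ)/(n:ℕ))) atTop (𝓝 0) := by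
      rw [tendsto_order]
      constructor
      · intro a ha
        filter_upwards with n
        exact lt_of_lt_of_le ha (Real.rpow_nonneg (hr0 n) _)
      · intro a ha
        set ε : ℝ := min a 1 / 2 with hε
        have hmin : 0 < min a 1 := lt_min ha one_pos
        have hε0 : 0 < ε := by rw [hε]; linarith
        have hε1 : ε < 1 := by
          have := min_le_right a 1
          rw [hε]; linarith
        have hεa : ε < a := by
          have := min_le_left a 1
          rw [hε]; linarith
        obtain ⟨c, hc, m, hbound⟩ := hrle (ε^2) (by positivity)
        have htend : Filter.Tendsto (fun n : ℕ => c * ε ^ (n - 2*m)) atTop (𝓝 0) := by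
          have h1 := (tendsto_pow_atTop_nhds_zero_of_lt_one hε0.le hε1).comp
            (Filter.tendsto_sub_atTop_nat (2*m))
          have h2 := h1.const_mul c
          simpa using h2
        have hev1 : ∀ᶠ n : ℕ in atTop, c * ε ^ (n - 2*m) ≤ 1 :=
          (Filter.Tendsto.eventually_lt_const one_pos htend).mono (fun n h => h.le)
        filter_upwards [hev1, Filter.eventually_ge_atTop (2*m + 1)] with n h1 h2
        have hnm : m < n := by omega
        have hrb := hbound n hnm
        have hrn2 : r n ≤ ε ^ n := by
          have he : (ε^2) ^ (n - m) = ε ^ (n - 2*m) * ε ^ n := by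
            rw [← pow_mul, ← pow_add]
            congr 1
            omega
          calc r n ≤ c * (ε^2) ^ (n - m) := hrb
            _ = (c * ε ^ (n - 2*m)) * ε ^ n := by rw [he]; ring
            _ ≤ 1 * ε ^ n := mul_le_mul_of_nonneg_right h1 (by positivity)
            _ = ε ^ n := one_mul _
        have hvb : (r n) ^ ((1:ℝ)/(n:ℕ)) ≤ ε := by
          have h3 : (r n) ^ ((1:ℝ)/(n:ℕ)) ≤ (ε ^ n) ^ ((1:ℝ)/(n:ℕ)) :=
            Real.rpow_le_rpow (hr0 n) hrn2 (by positivity)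
          have hne : (n:ℝ) ≠ 0 := by
            exact_mod_cast (by omega : n ≠ 0)
          have h4 : ((ε:ℝ) ^ n) ^ ((1:ℝ)/(n:ℕ)) = ε := by
            rw [← Real.rpow_natCast ε n, ← Real.rpow_mul hε0.le]
            rw [mul_one_div, div_self hne, Real.rpow_one]
          rw [h4] at h3
          exact h3
        exact lt_of_le_of_lt hvb hεa
    exact hv.limsup_eq
  · -- part 3
    intro η hη
    obtain ⟨c, hc, m, h⟩ := master η hη
    refine ⟨c, hc, m, fun n hn => ?_⟩
    refine h n hn (fun _ => 1) ?_
    intro ω _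
    simp
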